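/- arXiv:math/0306161 — 4 statements merged into one kernel-verified Lean document; each statement's English description precedes it below -/
import Mathlib

section
/- For the equidistant nodes t_j = -π + 2πj/N, the quantity τ_j = d/dt[∏_{l=1}^N sin((t - t_l)/2)] evaluated at t_j satisfies τ_j / τ_k = (-1)^{j-k} for all j, k, i.e., all τ_j have equal absolute value with alternating signs. -/
open Real Finset

/-- Equidistant nodes `t_j = -π + 2πj/N`. -/
noncomputable def node (N : ℕ) (j : Fin N) : ℝ := -π + 2 * π * (j.1 + 1) / N

/-- `τ_j = d/dt [∏_{l=1}^N sin((t - t_l)/2)]` evaluated at `t = t_j`. -/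
noncomputable def tau (N : ℕ) (j : Fin N) : ℝ :=
  deriv (fun t => ∏ l : Fin N, Real.sin ((t - node N l) / 2)) (node N j)

lemma node_sub (N : ℕ) (hN : 0 < N) (j l : Fin N) :
    (node N j - node N l) / 2 = π * ((j.1 : ℝ) - l.1) / N := by
  have hN' : (N : ℝ) ≠ 0 := Nat.cast_ne_zero.mpr hN.ne'
  unfold node
  field_simp
  ring

lemma tau_eq (N : ℕ) (hN : 0 < N) (j : Fin N) :
    tau N j = (1/2) * ∏ l ∈ univ.erase j, Real.sin (π * ((j.1 : ℝ) - l.1) / N) := by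
  classical
  set g : ℝ → ℝ := fun t => ∏ l ∈ univ.erase j, Real.sin ((t - node N l) / 2) with hg_def
  have hgdiff : DifferentiableAt ℝ g (node N j) := by
    apply DifferentiableAt.fun_finsetProd
    intro i _
    exact (((differentiableAt_id.sub_const _).div_const 2)).sin
  have h1 : HasDerivAt (fun t : ℝ => Real.sin ((t - node N j) / 2))
      (Real.cos ((node N j - node N j) / 2) * (1 / 2)) (node N j) := by
    have : HasDerivAt (fun t : ℝ => (t - node N j) / 2) (1 / 2) (node N j) := by
      simpa using ((hasDerivAt_id (node N j)).sub_const (node N j)).div_const 2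
    exact this.sin
  have h : HasDerivAt (fun t => Real.sin ((t - node N j) / 2) * g t)
      (Real.cos ((node N j - node N j) / 2) * (1 / 2) * g (node N j)
        + Real.sin ((node N j - node N j) / 2) * deriv g (node N j)) (node N j) :=
    h1.mul hgdiff.hasDerivAt
  have heq : (fun t => ∏ l : Fin N, Real.sin ((t - node N l) / 2))
      = fun t => Real.sin ((t - node N j) / 2) * g t := by
    funext t
    exact (Finset.mul_prod_erase univ _ (mem_univ j)).symm
  have : tau N j = Real.cos ((node N j - node N j) / 2) * (1 / 2) * g (node N j)
      + Real.sin ((node N j - node N j) / 2) * deriv g (node N j) := by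
    rw [tau, heq]; exact h.deriv
  rw [this]
  simp only [sub_self, zero_div, Real.cos_zero, Real.sin_zero, one_mul, zero_mul, add_zero]
  rw [hg_def]
  congr 1
  apply Finset.prod_congr rfl
  intro l _
  rw [node_sub N hN j l]

lemma prod_erase_eq (N : ℕ) (hN : 0 < N) (j : Fin N) :
    ∏ l ∈ univ.erase j, Real.sin (π * ((j.1 : ℝ) - l.1) / N)
      = (-1 : ℝ) ^ (N - 1 - j.1) * ∏ m ∈ Finset.Ico 1 N, Real.sin (π * (m : ℝ) / N) := by
  classical
  have hN' : (N : ℝ) ≠ 0 := Nat.cast_ne_zero.mpr hN.ne'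
  set s : ℕ → ℝ := fun m => Real.sin (π * (m : ℝ) / N) with hs
  set f : ℕ → ℝ := fun l => Real.sin (π * ((j.1 : ℝ) - l) / N) with hf
  -- transfer to ℕ
  have step1 : ∏ l ∈ univ.erase j, Real.sin (π * ((j.1 : ℝ) - l.1) / N)
      = ∏ l ∈ (Finset.range N).erase j.1, f l := by
    apply Finset.prod_nbij' (fun l : Fin N => l.1) (fun l => ⟨l % N, Nat.mod_lt _ hN⟩)
    · intro a ha
      simp only [Finset.mem_erase, Finset.mem_range]
      refine ⟨?_, a.isLt⟩
      intro h
      exact (Finset.mem_erase.mp ha).1 (Fin.ext h)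
    · intro a ha
      simp only [Finset.mem_erase, Finset.mem_range] at ha
      simp only [Finset.mem_erase, Finset.mem_univ, and_true]
      intro h
      apply ha.1
      have := congrArg Fin.val h
      simpa [Nat.mod_eq_of_lt ha.2] using this
    · intro a _; exact Fin.ext (Nat.mod_eq_of_lt a.isLt)
    · intro a ha
      simp only [Finset.mem_erase, Finset.mem_range] at ha
      exact Nat.mod_eq_of_lt ha.2
    · intro a _; rfl
  -- split erase into two intervals
  have hsplit : (Finset.range N).erase j.1
      = Finset.Ico 0 j.1 ∪ Finset.Ico (j.1 + 1) N := by
    ext x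
    simp only [Finset.mem_erase, Finset.mem_range, Finset.mem_union, Finset.mem_Ico]
    omega
  have hdisj : Disjoint (Finset.Ico 0 j.1) (Finset.Ico (j.1 + 1) N) := by
    rw [Finset.disjoint_left]
    intro a ha hb
    simp only [Finset.mem_Ico] at ha hb
    omega
  have step2 : ∏ l ∈ (Finset.range N).erase j.1, f l
      = (∏ l ∈ Finset.Ico 0 j.1, f l) * ∏ l ∈ Finset.Ico (j.1 + 1) N, f l := by
    rw [hsplit, Finset.prod_union hdisj]
  -- lower part: l < j, reindex m = j - l
  have step3 : ∏ l ∈ Finset.Ico 0 j.1, f l = ∏ m ∈ Finset.Ico 1 (j.1 + 1), s m := by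
    apply Finset.prod_nbij' (fun l => j.1 - l) (fun m => j.1 - m)
    · intro a ha; simp only [Finset.mem_Ico] at ha ⊢; omega
    · intro a ha; simp only [Finset.mem_Ico] at ha ⊢; omega
    · intro a ha; simp only [Finset.mem_Ico] at ha; omega
    · intro a ha; simp only [Finset.mem_Ico] at ha; omega
    · intro a ha
      simp only [Finset.mem_Ico] at ha
      have : ((j.1 - a : ℕ) : ℝ) = (j.1 : ℝ) - a := by
        have := ha.2
        push_cast [Nat.cast_sub (le_of_lt this)]
        ring
      simp only [hf, hs, this]
  -- upper part: l > j, reindex m = l - j, with signs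
  have step4 : ∏ l ∈ Finset.Ico (j.1 + 1) N, f l
      = (-1 : ℝ) ^ (N - 1 - j.1) * ∏ m ∈ Finset.Ico 1 (N - j.1), s m := by
    have e1 : ∏ l ∈ Finset.Ico (j.1 + 1) N, f l
        = ∏ l ∈ Finset.Ico (j.1 + 1) N, (-1 : ℝ) * s (l - j.1) := by
      apply Finset.prod_congr rfl
      intro l hl
      simp only [Finset.mem_Ico] at hl
      have hcast : ((l - j.1 : ℕ) : ℝ) = (l : ℝ) - j.1 := by
        push_cast [Nat.cast_sub (le_of_lt hl.1)]
        ring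
      have : π * ((j.1 : ℝ) - l) / N = -(π * ((l - j.1 : ℕ) : ℝ) / N) := by
        rw [hcast]; ring
      simp only [hf, hs, this, Real.sin_neg]
      ring
    rw [e1, Finset.prod_mul_distrib, Finset.prod_const, Nat.card_Ico]
    congr 1
    · congr 1; omega
    · apply Finset.prod_nbij' (fun l => l - j.1) (fun m => m + j.1)
      · intro a ha; simp only [Finset.mem_Ico] at ha ⊢; omega
      · intro a ha; simp only [Finset.mem_Ico] at ha ⊢; omega
      · intro a ha; simp only [Finset.mem_Ico] at ha; omega
      · intro a ha; simp only [Finset.mem_Ico] at ha; omega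
      · intro a _; rfl
  -- symmetry: reflect m ↦ N - m
  have step5 : ∏ m ∈ Finset.Ico 1 (N - j.1), s m = ∏ m ∈ Finset.Ico (j.1 + 1) N, s m := by
    apply Finset.prod_nbij' (fun m => N - m) (fun m => N - m)
    · intro a ha; simp only [Finset.mem_Ico] at ha ⊢; omega
    · intro a ha; simp only [Finset.mem_Ico] at ha ⊢; omega
    · intro a ha; simp only [Finset.mem_Ico] at ha; omega
    · intro a ha; simp only [Finset.mem_Ico] at ha; omega
    · intro a ha
      simp only [Finset.mem_Ico] at ha
      have hle : a ≤ N := by omega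
      have hcast : ((N - a : ℕ) : ℝ) = (N : ℝ) - a := by
        push_cast [Nat.cast_sub hle]; ring
      have : π * ((N - a : ℕ) : ℝ) / N = π - π * (a : ℝ) / N := by
        rw [hcast]; field_simp
      simp only [hs, this, Real.sin_pi_sub]
  rw [step1, step2, step3, step4, step5,
    ← Finset.prod_Ico_consecutive s (by omega : 1 ≤ j.1 + 1) (j.isLt : j.1 + 1 ≤ N)]
  ring

lemma prod_pos' (N : ℕ) (hN : 0 < N) :
    0 < ∏ m ∈ Finset.Ico 1 N, Real.sin (π * (m : ℝ) / N) := by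
  apply Finset.prod_pos
  intro m hm
  simp only [Finset.mem_Ico] at hm
  apply Real.sin_pos_of_pos_of_lt_pi
  · apply div_pos (mul_pos Real.pi_pos (by exact_mod_cast hm.1)) (by exact_mod_cast hN)
  · rw [div_lt_iff₀ (by exact_mod_cast hN)]
    have h1 : (m : ℝ) < N := by exact_mod_cast hm.2
    nlinarith [Real.pi_pos]

theorem tau_ratio (N : ℕ) (hN : 0 < N) (j k : Fin N) :
    tau N j / tau N k = (-1 : ℝ) ^ ((j.1 : ℤ) - (k.1 : ℤ)) := by
  have hP := prod_pos' N hN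
  set P : ℝ := ∏ m ∈ Finset.Ico 1 N, Real.sin (π * (m : ℝ) / N) with hPdef
  have hj : tau N j = (1/2) * ((-1 : ℝ) ^ (N - 1 - j.1) * P) := by
    rw [tau_eq N hN j, prod_erase_eq N hN j]
  have hk : tau N k = (1/2) * ((-1 : ℝ) ^ (N - 1 - k.1) * P) := by
    rw [tau_eq N hN k, prod_erase_eq N hN k]
  have hP' : P ≠ 0 := ne_of_gt hP
  have hne : (-1 : ℝ) ≠ 0 := by norm_num
  have ha : ((N - 1 - j.1 : ℕ) : ℤ) = (N : ℤ) - 1 - j.1 := by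
    have := j.isLt; omega
  have hb : ((N - 1 - k.1 : ℕ) : ℤ) = (N : ℤ) - 1 - k.1 := by
    have := k.isLt; omega
  have key : (-1 : ℝ) ^ (N - 1 - j.1)
      = (-1 : ℝ) ^ (N - 1 - k.1) * (-1 : ℝ) ^ ((j.1 : ℤ) - (k.1 : ℤ)) := by
    rw [← zpow_natCast (-1 : ℝ) (N - 1 - j.1), ← zpow_natCast (-1 : ℝ) (N - 1 - k.1),
      ← zpow_add₀ hne, ha, hb]
    have h2 : (N : ℤ) - 1 - k.1 + ((j.1 : ℤ) - k.1)
        = ((N : ℤ) - 1 - j.1) + 2 * ((j.1 : ℤ) - k.1) := by ring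
    rw [h2, zpow_add₀ hne, zpow_mul]
    norm_num
  have hkne : (1/2 : ℝ) * ((-1 : ℝ) ^ (N - 1 - k.1) * P) ≠ 0 := by
    apply mul_ne_zero (by norm_num)
    exact mul_ne_zero (pow_ne_zero _ hne) hP'
  rw [hj, hk, key, div_eq_iff hkne]
  ring
end

section
/- Let N = 2n+1 be odd, and let D be the N×N equispaced trigonometric differentiation matrix with nodes t_j = -π + 2πj/N. For every integer m with |m| ≤ n, the vector v with components v_j = exp(i m t_j) satisfies D v = (i m) v; that is, each such exponential sampled at the nodes is an eigenvector of D with eigenvalue i m. -/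
open Real
open Finset

/-- The equispaced trigonometric differentiation matrix, as a complex matrix. -/
noncomputable def Dmat (N : ℕ) : Matrix (Fin N) (Fin N) ℂ := fun j k =>
  if j = k then 0
  else (-1 : ℂ) ^ (j.1 + k.1) / (2 * (Real.sin (π * ((j.1 : ℝ) - (k.1 : ℝ)) / N) : ℂ))

lemma exp_double (x : ℝ) : Complex.exp (2*x*Complex.I) - 1
    = Complex.exp (x*Complex.I) * (2*Complex.I*(Real.sin x : ℂ)) := by
  have key : Complex.exp ((x:ℂ)*Complex.I) - Complex.exp (-(x:ℂ)*Complex.I)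
      = 2*(Real.sin x : ℂ)*Complex.I := by
    rw [Complex.exp_mul_I, Complex.exp_mul_I, Complex.cos_neg, Complex.sin_neg,
      Complex.ofReal_sin]
    ring
  have hab : Complex.exp ((x:ℂ)*Complex.I) * Complex.exp (-(x:ℂ)*Complex.I) = 1 := by
    rw [← Complex.exp_add]; ring_nf; exact Complex.exp_zero
  have h2 : Complex.exp (2*(x:ℂ)*Complex.I)
      = Complex.exp ((x:ℂ)*Complex.I) * Complex.exp ((x:ℂ)*Complex.I) := by
    rw [← Complex.exp_add]; ring_nf
  rw [h2]
  linear_combination Complex.exp ((x:ℂ)*Complex.I) * key + hab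


noncomputable def cterm (N : ℕ) (m : ℤ) (d : ℕ) : ℂ :=
  (-1)^(d+1) * Complex.exp (2*π*Complex.I*m*d/N) / (2 * (Real.sin (π*d/N) : ℂ))

lemma csum_zero (n : ℕ) : ∑ d ∈ range (2*n+1), cterm (2*n+1) 0 d = 0 := by
  set N := 2*n+1 with hN
  apply Finset.sum_involution (fun d _ => (N - d) % N)
  · intro d hd
    simp only [Finset.mem_range] at hd
    rcases Nat.eq_zero_or_pos d with h0 | h0
    · subst h0
      simp [cterm]
    · have h1 : (N - d) % N = N - d := Nat.mod_eq_of_lt (by omega)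
      rw [h1]
      have hsin : Real.sin (π*(N-d:ℕ)/N) = Real.sin (π*d/N) := by
        have : (((N-d:ℕ)):ℝ) = N - d := by
          push_cast [Nat.cast_sub (le_of_lt hd)]; ring
        rw [this]
        have hNne : (N:ℝ) ≠ 0 := by positivity
        have : π*((N:ℝ)-d)/N = π - π*d/N := by field_simp
        rw [this, Real.sin_pi_sub]
      have hsign : ((-1:ℂ))^((N-d)+1) = -(-1)^(d+1) := by
        rcases Nat.even_or_odd d with he | ho
        · have h1 : Odd (d+1) := he.add_one
          have h2 : Even ((N-d)+1) := by
            have : Odd (N - d) := by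
              rcases he with ⟨a, ha⟩
              refine ⟨n - a, by omega⟩
            exact this.add_one
          rw [h2.neg_one_pow, h1.neg_one_pow]; norm_num
        · have h1 : Even (d+1) := ho.add_one
          have h2 : Odd ((N-d)+1) := by
            have : Even (N - d) := by
              rcases ho with ⟨a, ha⟩
              refine ⟨n - a, by omega⟩
            exact this.add_one
          rw [h2.neg_one_pow, h1.neg_one_pow]
      simp only [cterm, hsin, hsign, Int.cast_zero, mul_zero, zero_mul, zero_div,
        Complex.exp_zero, mul_one]
      ring
  · intro d hd hne
    simp only [Finset.mem_range] at hd
    intro heq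
    rcases Nat.eq_zero_or_pos d with h0 | h0
    · apply hne; subst h0; simp [cterm]
    · have h1 : (N - d) % N = N - d := Nat.mod_eq_of_lt (by omega)
      rw [h1] at heq
      omega
  · intro d hd
    simp only [Finset.mem_range] at *
    exact Nat.mod_lt _ (by omega)
  · intro d hd
    simp only [Finset.mem_range] at hd
    rcases Nat.eq_zero_or_pos d with h0 | h0
    · subst h0; simp
    · have h1 : (N - d) % N = N - d := Nat.mod_eq_of_lt (by omega)
      simp only [h1]
      have : N - (N - d) = d := by omega
      rw [Nat.mod_eq_of_lt (by omega), this]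

lemma csum_step (n : ℕ) (m : ℤ) (h1 : -(n:ℤ) ≤ m) (h2 : m < n) :
    ∑ d ∈ range (2*n+1), cterm (2*n+1) (m+1) d
      = (∑ d ∈ range (2*n+1), cterm (2*n+1) m d) + Complex.I := by
  set N := 2*n+1 with hN
  have hNpos : 0 < N := by omega
  have hNR : (N:ℝ) ≠ 0 := by positivity
  have hNC : (N:ℂ) ≠ 0 := by exact_mod_cast (by positivity : (N:ℝ) ≠ 0)
  set z : ℂ := -Complex.exp (↑π*(2*↑m+1)*Complex.I/↑N) with hz
  have hzN : z^N = 1 := by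
    rw [hz, neg_pow]
    have hodd : Odd N := ⟨n, by omega⟩
    rw [hodd.neg_one_pow]
    have : Complex.exp (↑π*(2*↑m+1)*Complex.I/↑N) ^ N
        = Complex.exp ((N:ℂ) * (↑π*(2*↑m+1)*Complex.I/↑N)) := (Complex.exp_nat_mul _ N).symm
    rw [this]
    have harg : (N:ℂ) * (↑π*(2*↑m+1)*Complex.I/↑N) = ((2*m+1 : ℤ) : ℂ) * (↑π*Complex.I) := by
      field_simp
      push_cast
      ring
    rw [harg, Complex.exp_int_mul, Complex.exp_pi_mul_I]
    rw [zpow_add₀ (by norm_num : (-1:ℂ) ≠ 0), zpow_mul]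
    norm_num
  have hz1 : z ≠ 1 := by
    intro h
    rw [hz, neg_eq_iff_eq_neg] at h
    have hsq : Complex.exp ((2:ℕ) * (↑π*(2*↑m+1)*Complex.I/↑N)) = 1 := by
      rw [Complex.exp_nat_mul, h]; norm_num
    rw [Complex.exp_eq_one_iff] at hsq
    obtain ⟨k, hk⟩ := hsq
    have hre : (2 * (π*(2*(m:ℝ)+1)/N) : ℝ) = (k:ℝ) * (2*π) := by
      have : ((2:ℕ):ℂ) * (↑π*(2*↑m+1)*Complex.I/↑N)
          = ((2 * (π*(2*(m:ℝ)+1)/N) : ℝ) : ℂ) * Complex.I := by push_cast; ring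
      rw [this] at hk
      have h2 : ((k:ℂ)) * (2*↑π*Complex.I) = (((k:ℝ) * (2*π) : ℝ):ℂ) * Complex.I := by
        push_cast; ring
      rw [h2] at hk
      exact_mod_cast mul_right_cancel₀ Complex.I_ne_zero hk
    have hint : (2*m+1 : ℤ) = k * N := by
      have hπ : (π:ℝ) ≠ 0 := Real.pi_ne_zero
      have h2pi : (2*π) * ((2*m+1 : ℤ):ℝ) = (2*π) * ((k:ℝ) * ((N:ℕ):ℝ)) := by
        field_simp at hre
        push_cast at hre ⊢
        linear_combination (2*π) * hre
      have := mul_left_cancel₀ (by positivity : (2*π:ℝ) ≠ 0) h2pi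
      exact_mod_cast this
    have hNZ : ((N:ℤ)) = 2*n+1 := by exact_mod_cast rfl
    have hb1 : -(N:ℤ) < 2*m+1 := by omega
    have hb2 : (2*m+1 : ℤ) < N := by omega
    have hk0 : k = 0 := by
      by_contra hk0
      have hNpos' : (0:ℤ) < N := by omega
      rcases lt_or_gt_of_ne hk0 with hneg | hpos
      · nlinarith
      · nlinarith
    rw [hk0, zero_mul] at hint
    omega
  have hgeom : ∑ d ∈ range N, z^d = 0 := by
    rw [geom_sum_eq hz1, hzN]; simp
  have hpt : ∀ d ∈ range N, cterm N (m+1) d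
      = cterm N m d + (-Complex.I * z^d + if d = 0 then Complex.I else 0) := by
    intro d hd
    simp only [mem_range] at hd
    rcases Nat.eq_zero_or_pos d with h0 | h0
    · subst h0
      simp [cterm, hz]
    · rw [if_neg (by omega)]
      set s : ℝ := Real.sin (π*d/N) with hs
      have hspos : 0 < s := by
        rw [hs]
        apply Real.sin_pos_of_pos_of_lt_pi
        · positivity
        · rw [div_lt_iff₀ (by positivity)]
          have : (d:ℝ) < (N:ℝ) := by exact_mod_cast hd
          nlinarith [Real.pi_pos]
      have hsne : (s:ℂ) ≠ 0 := by exact_mod_cast hspos.ne'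
      set w : ℂ := Complex.exp ((π*d/N : ℝ)*Complex.I) with hw
      set E : ℂ := Complex.exp (2*↑π*Complex.I*↑m*↑d/↑N) with hE
      have hA : Complex.exp (2*↑π*Complex.I*↑(m+1)*↑d/↑N) = E * w^2 := by
        rw [hE, hw, sq, ← Complex.exp_add, ← Complex.exp_add]
        congr 1
        push_cast
        field_simp
        ring
      have hB : w^2 - 1 = w * (2*Complex.I*(s:ℂ)) := by
        have := exp_double (π*d/N)
        rw [← hs, ← hw] at this
        rw [← this]
        congr 2
        rw [hw, sq, ← Complex.exp_add]
        congr 1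
        push_cast
        ring
      have hC : z^d = (-1)^d * (E * w) := by
        rw [hz, neg_pow]
        congr 1
        rw [hE, hw, ← Complex.exp_nat_mul, ← Complex.exp_add]
        congr 1
        push_cast
        field_simp
      simp only [cterm, hA, hC, ← hs]
      rw [div_add' _ _ _ (by exact_mod_cast (by positivity : (2*s:ℝ) ≠ 0))]
      congr 1
      linear_combination ((-1:ℂ)^(d+1) * E) * hB
  rw [Finset.sum_congr rfl hpt, Finset.sum_add_distrib, Finset.sum_add_distrib,
    Finset.sum_ite_eq' (range N) 0 (fun _ => Complex.I), if_pos (mem_range.mpr hNpos),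
    ← Finset.mul_sum, hgeom]
  ring

lemma cterm_conj (N : ℕ) (m : ℤ) (d : ℕ) :
    (starRingEnd ℂ) (cterm N m d) = cterm N (-m) d := by
  have harg : (starRingEnd ℂ) (2*↑π*Complex.I*(m:ℂ)*(d:ℂ)/(N:ℂ))
      = 2*↑π*Complex.I*((-m:ℤ):ℂ)*(d:ℂ)/(N:ℂ) := by
    simp only [map_div₀, map_mul, Complex.conj_I, Complex.conj_ofReal,
      Complex.conj_natCast, map_intCast, map_ofNat]
    push_cast
    ring
  simp only [cterm, map_div₀, map_mul, map_pow, map_neg, map_one, map_ofNat,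
    ← Complex.exp_conj, harg, Complex.conj_ofReal]

lemma csum_nat (n : ℕ) (p : ℕ) (hp : p ≤ n) :
    ∑ d ∈ range (2*n+1), cterm (2*n+1) (p:ℤ) d = Complex.I * p := by
  induction p with
  | zero => simpa using csum_zero n
  | succ q ih =>
    have hq : q ≤ n := by omega
    have hstep := csum_step n q (by omega) (by omega)
    push_cast
    push_cast at hstep
    rw [hstep, ih hq]
    ring

lemma csum (n : ℕ) (m : ℤ) (hm : |m| ≤ (n:ℤ)) :
    ∑ d ∈ range (2*n+1), cterm (2*n+1) m d = Complex.I * m := by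
  obtain ⟨hL, hR⟩ := abs_le.mp hm
  rcases le_or_gt 0 m with h | h
  · have h1 := csum_nat n m.toNat (by omega)
    have hp' : ((m.toNat : ℤ)) = m := Int.toNat_of_nonneg h
    rw [hp'] at h1
    rw [h1]
    congr 1
    exact_mod_cast congrArg (Int.cast : ℤ → ℂ) hp'
  · have hp' : (((-m).toNat : ℤ)) = -m := Int.toNat_of_nonneg (by omega)
    have h1 := csum_nat n (-m).toNat (by omega)
    rw [hp'] at h1
    have hc := congrArg (starRingEnd ℂ) h1
    rw [map_sum] at hc
    simp only [cterm_conj, neg_neg] at hc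
    rw [hc, map_mul, Complex.conj_I, Complex.conj_natCast]
    have hpc : (((-m).toNat : ℕ) : ℂ) = -(m:ℂ) := by exact_mod_cast congrArg (Int.cast : ℤ → ℂ) hp'
    rw [hpc]
    ring

lemma row_term (n : ℕ) (m : ℤ) (v : Fin (2*n+1) → ℂ)
    (hv : ∀ j, v j = Complex.exp (Complex.I * m * (node (2*n+1) j : ℝ)))
    (j d : Fin (2*n+1)) :
    Dmat (2*n+1) j (j+d) * v (j+d) = v j * cterm (2*n+1) m d.1 := by
  have hNR : ((2*n+1:ℕ):ℝ) ≠ 0 := by positivity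
  have hk1 : ((j+d).1) = (j.1 + d.1) % (2*n+1) := by rw [Fin.add_def]
  rcases Nat.eq_zero_or_pos d.1 with h0 | h0
  · have hd0 : d = 0 := by apply Fin.ext; simp [h0]
    subst hd0
    simp [Dmat, cterm]
  · have hdlt : d.1 < 2*n+1 := d.2
    have hjlt : j.1 < 2*n+1 := j.2
    rcases lt_or_ge (j.1 + d.1) (2*n+1) with hA | hB
    · -- case A : no wraparound
      have hk : ((j+d).1) = j.1 + d.1 := by rw [hk1, Nat.mod_eq_of_lt hA]
      have hne : j ≠ j + d := by
        intro h; have := congrArg Fin.val h; omega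
      have hnode : (node (2*n+1) (j+d) : ℝ)
          = node (2*n+1) j + 2*π*(d.1:ℝ)/((2*n+1:ℕ):ℝ) := by
        simp only [node, hk]
        push_cast
        field_simp
        ring
      have hvk : v (j+d) = v j
          * Complex.exp (2*(π:ℂ)*Complex.I*(m:ℂ)*(d.1:ℂ)/((2*n+1:ℕ):ℂ)) := by
        rw [hv, hv, ← Complex.exp_add]
        congr 1
        rw [hnode]
        push_cast
        ring
      have hsin : Real.sin (π * ((j.1:ℝ) - (((j+d).1:ℕ):ℝ)) / ((2*n+1:ℕ):ℝ))
          = -Real.sin (π*(d.1:ℝ)/((2*n+1:ℕ):ℝ)) := by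
        rw [hk]
        push_cast
        rw [show π * ((j.1:ℝ) - ((j.1:ℝ)+(d.1:ℝ))) / (2*(n:ℝ)+1)
            = -(π*(d.1:ℝ)/(2*(n:ℝ)+1)) by ring, Real.sin_neg]
      have hsign : ((-1:ℂ))^(j.1 + (j+d).1) = (-1)^d.1 := by
        rw [hk, show j.1 + (j.1 + d.1) = 2*j.1 + d.1 by ring, pow_add, pow_mul]
        norm_num
      rw [Dmat]
      simp only [if_neg hne]
      rw [hsign, hvk, hsin, cterm]
      push_cast
      rw [mul_neg, div_neg, pow_succ]
      ring
    · -- case B : wraparound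
      have hk : ((j+d).1) = j.1 + d.1 - (2*n+1) := by
        rw [hk1, Nat.mod_eq_sub_mod hB, Nat.mod_eq_of_lt (by omega)]
      have hne : j ≠ j + d := by
        intro h; have := congrArg Fin.val h; omega
      have hcast : ((((j+d).1):ℕ) : ℝ) = (j.1:ℝ) + (d.1:ℝ) - ((2*n+1:ℕ):ℝ) := by
        rw [hk]
        push_cast [Nat.cast_sub hB]
        ring
      have hnode : (node (2*n+1) (j+d) : ℝ)
          = node (2*n+1) j + 2*π*(d.1:ℝ)/((2*n+1:ℕ):ℝ) - 2*π := by
        simp only [node, hcast]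
        field_simp
        ring
      have hvk : v (j+d) = v j
          * Complex.exp (2*(π:ℂ)*Complex.I*(m:ℂ)*(d.1:ℂ)/((2*n+1:ℕ):ℂ)) := by
        rw [hv, hv]
        have harg : Complex.I*(m:ℂ)*((node (2*n+1) (j+d):ℝ):ℂ)
            = Complex.I*(m:ℂ)*((node (2*n+1) j:ℝ):ℂ)
              + 2*(π:ℂ)*Complex.I*(m:ℂ)*(d.1:ℂ)/((2*n+1:ℕ):ℂ)
              + ((-m:ℤ):ℂ)*(2*(π:ℂ)*Complex.I) := by
          rw [hnode]
          push_cast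
          ring
        rw [harg, Complex.exp_add, Complex.exp_add, Complex.exp_int_mul_two_pi_mul_I, mul_one]
      have hsin : Real.sin (π * ((j.1:ℝ) - (((j+d).1:ℕ):ℝ)) / ((2*n+1:ℕ):ℝ))
          = Real.sin (π*(d.1:ℝ)/((2*n+1:ℕ):ℝ)) := by
        rw [hcast, show π * ((j.1:ℝ) - ((j.1:ℝ)+(d.1:ℝ)-((2*n+1:ℕ):ℝ))) / ((2*n+1:ℕ):ℝ)
            = π - π*(d.1:ℝ)/((2*n+1:ℕ):ℝ) by field_simp; ring]
        exact Real.sin_pi_sub _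
      have hsign : ((-1:ℂ))^(j.1 + (j+d).1) = (-1)^(d.1+1) := by
        have hnat : j.1 + (j+d).1 + (2*n+1) = 2*j.1 + d.1 := by omega
        have h1 : ((-1:ℂ))^(j.1 + (j+d).1) * (-1)^(2*n+1) = (-1)^(2*j.1+d.1) := by
          rw [← pow_add, hnat]
        have h2 : ((-1:ℂ))^(2*n+1) = -1 := Odd.neg_one_pow ⟨n, by omega⟩
        have h3 : ((-1:ℂ))^(2*j.1+d.1) = (-1)^d.1 := by
          rw [pow_add, pow_mul]; norm_num
        rw [h2, h3] at h1
        rw [pow_succ]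
        linear_combination -h1
      rw [Dmat]
      simp only [if_neg hne]
      rw [hsign, hvk, hsin, cterm]
      push_cast
      ring

theorem exp_eigenvector (n : ℕ) (m : ℤ) (hm : |m| ≤ (n : ℤ))
    (v : Fin (2 * n + 1) → ℂ)
    (hv : ∀ j, v j = Complex.exp (Complex.I * m * (node (2 * n + 1) j : ℝ))) :
    (Dmat (2 * n + 1)).mulVec v = (Complex.I * m) • v := by
  funext j
  have hre : ∑ d : Fin (2*n+1), Dmat (2*n+1) j (j+d) * v (j+d)
      = ∑ k : Fin (2*n+1), Dmat (2*n+1) j k * v k :=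
    Fintype.sum_equiv (Equiv.addLeft j) _ _ (fun d => rfl)
  have h2 : ∑ d : Fin (2*n+1), Dmat (2*n+1) j (j+d) * v (j+d)
      = v j * (Complex.I * m) := by
    rw [Finset.sum_congr rfl (fun d _ => row_term n m v hv j d), ← Finset.mul_sum]
    congr 1
    rw [show (∑ d : Fin (2*n+1), cterm (2*n+1) m d.1)
        = ∑ d ∈ range (2*n+1), cterm (2*n+1) m d from Fin.sum_univ_eq_sum_range _ _]
    exact csum n m hm
  show (Dmat (2*n+1)).mulVec v j = (Complex.I * ↑m) • v j
  simp only [Matrix.mulVec, dotProduct, Pi.smul_apply, smul_eq_mul]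
  rw [← hre, h2]
  ring
end

section
/- Let N = 2n+1 be odd and D the equispaced trigonometric differentiation matrix on nodes t_j = -π + 2πj/N. If x(t) is a trigonometric polynomial of degree at most n, then the vector with entries x'(t_j) equals D applied to the vector with entries x(t_j). -/
open Real Finset

/-- `x` is a trigonometric polynomial of degree at most `n` (complex coefficients). -/
def IsTrigPoly (n : ℕ) (x : ℝ → ℂ) : Prop :=
  ∃ a b : ℕ → ℂ, ∀ t : ℝ,
    x t = a 0 + ∑ m ∈ Finset.Icc 1 n,
      (a m * (Real.cos (m * t) : ℝ) + b m * (Real.sin (m * t) : ℝ))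

namespace TrigDiff

noncomputable def w (N : ℕ) : ℂ := Complex.exp (2 * ↑π * Complex.I / N)

variable {N : ℕ}

lemma w_prim (hN : N ≠ 0) : IsPrimitiveRoot (w N) N := Complex.isPrimitiveRoot_exp N hN

lemma w_pow_N (hN : N ≠ 0) : w N ^ N = 1 := (w_prim hN).pow_eq_one

lemma w_ne_one (hd : 0 < d) (hdN : d < N) : w N ^ d ≠ 1 :=
  (w_prim (by omega)).pow_ne_one_of_pos_of_lt hd.ne' hdN

lemma w_ne_zero : w N ≠ 0 := Complex.exp_ne_zero _

/-- geometric sum -/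
lemma sum_w_pow (hr : 0 < r) (hrN : r < N) : ∑ d ∈ Finset.range N, w N ^ (r * d) = 0 := by
  have h1 : (w N ^ r) ≠ 1 := w_ne_one hr hrN
  have := geom_sum_eq h1 N
  simp only [pow_mul]
  rw [this, ← pow_mul, mul_comm r N, pow_mul, w_pow_N (by omega)]
  simp

noncomputable def F (N r : ℕ) : ℂ := ∑ d ∈ Finset.Ico 1 N, w N ^ (r * d) / (w N ^ d - 1)

lemma F_top (hN : N ≠ 0) : F N N = -((N : ℂ) - 1) / 2 := by
  have key : (2 : ℂ) * F N N = -((N : ℂ) - 1) := by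
    have hrefl : F N N = ∑ d ∈ Finset.Ico 1 N, w N ^ (N * (N - d)) / (w N ^ (N - d) - 1) := by
      unfold F
      apply Finset.sum_nbij' (fun d => N - d) (fun d => N - d)
      · intro a ha; simp only [Finset.mem_Ico] at *; omega
      · intro a ha; simp only [Finset.mem_Ico] at *; omega
      · intro a ha; simp only [Finset.mem_Ico] at ha; omega
      · intro a ha; simp only [Finset.mem_Ico] at ha; omega
      · intro a ha; simp only [Finset.mem_Ico] at ha
        have h : N - (N - a) = a := by omega
        rw [h]
    have : (2:ℂ) * F N N = ∑ d ∈ Finset.Ico 1 N,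
        (w N ^ (N * d) / (w N ^ d - 1) + w N ^ (N * (N - d)) / (w N ^ (N - d) - 1)) := by
      rw [Finset.sum_add_distrib, ← hrefl]; unfold F; ring
    rw [this]
    have hterm : ∀ d ∈ Finset.Ico 1 N,
        w N ^ (N * d) / (w N ^ d - 1) + w N ^ (N * (N - d)) / (w N ^ (N - d) - 1) = -1 := by
      intro d hd
      simp only [Finset.mem_Ico] at hd
      have h1 : w N ^ d ≠ 1 := w_ne_one hd.1 hd.2
      have h2 : w N ^ (N - d) ≠ 1 := w_ne_one (by omega) (by omega)
      have hmul : w N ^ d * w N ^ (N - d) = 1 := by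
        rw [← pow_add]
        have : d + (N - d) = N := by omega
        rw [this, w_pow_N hN]
      have hwN : ∀ k, w N ^ (N * k) = 1 := by
        intro k; rw [pow_mul, w_pow_N hN, one_pow]
      rw [hwN, hwN]
      have h1' : w N ^ d - 1 ≠ 0 := sub_ne_zero.mpr h1
      have h2' : w N ^ (N - d) - 1 ≠ 0 := sub_ne_zero.mpr h2
      field_simp
      linear_combination hmul
    rw [Finset.sum_congr rfl hterm]
    rw [Finset.sum_const, Nat.card_Ico]
    rw [nsmul_eq_mul, Nat.cast_sub (by omega : 1 ≤ N)]
    push_cast; ring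
  linear_combination key / 2


lemma F_succ {r : ℕ} (hr : 0 < r) (hrN : r < N) : F N (r + 1) = F N r - 1 := by
  unfold F
  have hterm : ∀ d ∈ Finset.Ico 1 N, w N ^ ((r+1) * d) / (w N ^ d - 1)
      = w N ^ (r * d) / (w N ^ d - 1) + w N ^ (r * d) := by
    intro d hd
    simp only [Finset.mem_Ico] at hd
    have h1' : w N ^ d - 1 ≠ 0 := sub_ne_zero.mpr (w_ne_one hd.1 hd.2)
    field_simp
    rw [show (r+1)*d = r*d+d by ring, pow_add]
    ring
  rw [Finset.sum_congr rfl hterm, Finset.sum_add_distrib]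
  have h2 : ∑ d ∈ Finset.Ico 1 N, w N ^ (r * d) = -1 := by
    have h0 := sum_w_pow hr hrN
    rw [Finset.range_eq_Ico, Finset.sum_eq_sum_Ico_succ_bot (by omega : 0 < N)] at h0
    simp only [mul_zero, pow_zero, zero_add] at h0
    linear_combination h0
  rw [h2]; ring

lemma F_val_aux (n : ℕ) : ∀ s, s ≤ 2*n → F (2*n+1) (2*n+1 - s) = (s : ℂ) - n := by
  intro s
  induction s with
  | zero =>
      intro _
      have := F_top (N := 2*n+1) (by omega)
      simp only [Nat.sub_zero] at *
      rw [this]; push_cast; ring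
  | succ s ih =>
      intro hs
      have hrec := F_succ (N := 2*n+1) (r := 2*n - s) (by omega) (by omega)
      rw [show 2*n - s + 1 = 2*n+1 - s by omega] at hrec
      rw [ih (by omega)] at hrec
      rw [show (2*n+1) - (s+1) = 2*n - s by omega]
      push_cast
      linear_combination -hrec

lemma F_val (n r : ℕ) (hr : 1 ≤ r) (hrN : r ≤ 2*n+1) :
    F (2*n+1) r = ((n : ℂ) + 1) - r := by
  have h := F_val_aux n (2*n+1 - r) (by omega)
  rw [show 2*n+1 - (2*n+1 - r) = r by omega] at h
  rw [h]
  have : ((2*n+1 - r : ℕ) : ℂ) = 2*(n:ℂ)+1 - r := by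
    rw [Nat.cast_sub (by omega)]; push_cast; ring
  rw [this]; ring


lemma w_zpow_eq (hN : N ≠ 0) {a b : ℤ} (h : a % N = b % N) : w N ^ a = w N ^ b := by
  have hd : (N:ℤ) ∣ a - b := Int.ModEq.dvd (Int.ModEq.symm h)
  obtain ⟨t, ht⟩ := hd
  have ha : a = b + N * t := by linarith
  rw [ha, zpow_add₀ w_ne_zero, zpow_mul, zpow_natCast, w_pow_N hN, one_zpow, mul_one]

lemma d_mod_ne_zero (hN : N ≠ 0) {d : ℤ} (hd0 : d ≠ 0) (h1 : -(N:ℤ) < d) (h2 : d < N) :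
    d % (N:ℤ) ≠ 0 := by
  rcases lt_or_gt_of_ne hd0 with h | h
  · have : d % (N:ℤ) = (d + N) % N := by
      rw [show d + (N:ℤ) = d + N * 1 by ring, Int.add_mul_emod_self_left]
    rw [this, Int.emod_eq_of_lt (by omega) (by omega)]; omega
  · rw [Int.emod_eq_of_lt (by omega) (by omega)]; omega

lemma w_zpow_ne_one (hN : N ≠ 0) {d : ℤ} (h : d % (N:ℤ) ≠ 0) : w N ^ d ≠ 1 := by
  have h1 : w N ^ d = w N ^ (d % N) := w_zpow_eq hN (Int.emod_emod_of_dvd d dvd_rfl).symm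
  have h2 : 0 ≤ d % (N:ℤ) := Int.emod_nonneg d (by exact_mod_cast hN)
  have h3 : d % (N:ℤ) < N := Int.emod_lt_of_pos d (by positivity)
  rw [h1, show d % (N:ℤ) = ((d % (N:ℤ)).toNat : ℤ) by omega, zpow_natCast]
  exact w_ne_one (by omega) (by omega)

lemma Dmat_eq {N n : ℕ} (hNdef : N = 2*n+1) (j k : Fin N) (hjk : j ≠ k) :
    Dmat N j k =
      Complex.I * w N ^ (((n:ℤ)+1) * ((j.1:ℤ) - k.1)) /
        (w N ^ ((j.1:ℤ) - (k.1:ℤ)) - 1) := by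
  have hNz : N ≠ 0 := by omega
  set d : ℤ := (j.1:ℤ) - k.1 with hd
  set ζ : ℂ := Complex.exp (π * Complex.I / N) with hζ
  have hζ0 : ζ ≠ 0 := Complex.exp_ne_zero _
  have hζ2 : ζ ^ (2:ℕ) = w N := by
    rw [hζ, ← Complex.exp_nat_mul]; unfold w; norm_num; ring_nf
  have hw2 : ∀ a : ℤ, w N ^ a = ζ ^ (2 * a) := by
    intro a
    rw [← hζ2, ← zpow_natCast ζ 2, ← zpow_mul]
    norm_num
  have hζN : ζ ^ (N:ℕ) = -1 := by
    rw [hζ, ← Complex.exp_nat_mul,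
      show (N:ℂ) * (π * Complex.I / N) = π * Complex.I by
        have : (N:ℂ) ≠ 0 := Nat.cast_ne_zero.mpr hNz
        field_simp]
    exact Complex.exp_pi_mul_I
  have hdne : d % (N:ℤ) ≠ 0 := by
    apply d_mod_ne_zero hNz
    · simp only [hd, sub_ne_zero]
      exact fun h => hjk (Fin.ext (by exact_mod_cast h))
    · have := j.2; have := k.2; omega
    · have := j.2; have := k.2; omega
  have hwd : w N ^ d - 1 ≠ 0 := sub_ne_zero.mpr (w_zpow_ne_one hNz hdne)
  have hζ2d : ζ ^ (2*d) - 1 ≠ 0 := by rw [← hw2]; exact hwd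
  -- exponentials
  have e1 : Complex.exp ((π * ((j.1:ℝ) - (k.1:ℝ)) / N : ℝ) * Complex.I) = ζ ^ d := by
    rw [show ((π * ((j.1:ℝ) - (k.1:ℝ)) / N : ℝ) : ℂ) * Complex.I
        = (d:ℂ) * (π * Complex.I / N) by push_cast [hd]; ring, Complex.exp_int_mul]
  have e2 : Complex.exp (-((π * ((j.1:ℝ) - (k.1:ℝ)) / N : ℝ) : ℂ) * Complex.I) = ζ ^ (-d) := by
    rw [show (-((π * ((j.1:ℝ) - (k.1:ℝ)) / N : ℝ) : ℂ)) * Complex.I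
        = ((-d : ℤ):ℂ) * (π * Complex.I / N) by push_cast [hd]; ring, Complex.exp_int_mul]
  have hsin : 2 * ((Real.sin (π * ((j.1:ℝ) - (k.1:ℝ)) / N) : ℝ) : ℂ)
      = (ζ ^ (-d) - ζ ^ d) * Complex.I := by
    rw [Complex.ofReal_sin, Complex.sin, e1, e2]
    ring
  have hIne : (ζ ^ (-d) - ζ ^ d) * Complex.I ≠ 0 := by
    intro hcon
    apply hζ2d
    have h4 : ζ ^ (-d) - ζ ^ d = 0 := by
      simpa [Complex.I_ne_zero] using hcon
    have h5 : ζ ^ d * (ζ ^ (-d) - ζ ^ d) = 1 - ζ ^ (2*d) := by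
      rw [mul_sub, ← zpow_add₀ hζ0, ← zpow_add₀ hζ0]
      norm_num
      rw [show d + d = 2*d by ring]
    rw [h4, mul_zero] at h5
    linear_combination h5
  have hsign : ((-1 : ℂ)) ^ (j.1 + k.1) = ζ ^ ((N:ℤ) * d) := by
    have hz1 : ζ ^ ((N:ℤ) * d) = ((-1 : ℂ)) ^ d := by
      rw [zpow_mul, zpow_natCast, hζN]
    have hz2 : ((-1 : ℂ)) ^ d = ((-1 : ℂ)) ^ ((j.1 + k.1 : ℕ) : ℤ) := by
      rw [show ((j.1 + k.1 : ℕ) : ℤ) = d + 2 * (k.1:ℤ) by push_cast [hd]; ring,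
        zpow_add₀ (by norm_num : (-1:ℂ) ≠ 0), zpow_mul]
      norm_num
    rw [hz1, hz2, zpow_natCast]
  -- main computation
  simp only [Dmat]
  rw [if_neg hjk, hsign, hsin, hw2, hw2]
  rw [div_eq_div_iff hIne hζ2d]
  have hA : ζ^(2*(((n:ℤ)+1)*d)) * ζ^(-d) = ζ^((N:ℤ)*d) := by
    rw [← zpow_add₀ hζ0]; congr 1; push_cast [hNdef]; ring
  have hB : ζ^(2*(((n:ℤ)+1)*d)) * ζ^d = ζ^((N:ℤ)*d) * ζ^(2*d) := by
    rw [← zpow_add₀ hζ0, ← zpow_add₀ hζ0]; congr 1; push_cast [hNdef]; ring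
  linear_combination hA - hB - (ζ^(2*(((n:ℤ)+1)*d)) * (ζ^(-d) - ζ^d)) * Complex.I_mul_I

lemma fin_sub_val_mod (N : ℕ) [NeZero N] (a b : Fin N) :
    ((a - b).val : ℤ) % N = ((a.1 : ℤ) - b.1) % N := by
  have h : (a - b).val = (N - b.1 + a.1) % N := by rw [Fin.sub_def]
  have hb : b.1 ≤ N := le_of_lt b.2
  have h2 : (((a-b).val : ℤ)) = ((N - b.1 + a.1 : ℕ) : ℤ) % N := by rw [h]; push_cast; ring
  rw [h2, Int.emod_emod_of_dvd _ dvd_rfl, Nat.cast_add, Nat.cast_sub hb,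
    show ((N:ℤ) - b.1 + a.1) = ((a.1:ℤ) - b.1) + N * 1 by ring, Int.add_mul_emod_self_left]

lemma node_exp (n : ℕ) (m : ℤ) (j k : Fin (2*n+1)) :
    Complex.exp (Complex.I * m * node (2*n+1) k)
      = Complex.exp (Complex.I * m * node (2*n+1) j)
        * w (2*n+1) ^ (m * ((k.1:ℤ) - j.1)) := by
  have hN : ((2*n+1 : ℕ) : ℂ) ≠ 0 := by exact_mod_cast (by omega : (2*n+1 : ℕ) ≠ 0)
  unfold w
  rw [← Complex.exp_int_mul, ← Complex.exp_add]
  congr 1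
  unfold node
  push_cast
  field_simp
  ring

lemma key (n : ℕ) (m : ℤ) (hm1 : -(n:ℤ) ≤ m) (hm2 : m ≤ n) (j : Fin (2*n+1)) :
    ∑ k, Dmat (2*n+1) j k * Complex.exp (Complex.I * m * node (2*n+1) k)
      = Complex.I * m * Complex.exp (Complex.I * m * node (2*n+1) j) := by
  have hNz : (2*n+1 : ℕ) ≠ 0 := by omega
  set r : ℕ := ((n:ℤ) + 1 - m).toNat with hrdef
  have hrval : (r : ℤ) = (n:ℤ) + 1 - m := Int.toNat_of_nonneg (by omega)
  set G : Fin (2*n+1) → ℂ := fun v =>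
    if v = 0 then 0 else w (2*n+1) ^ (r * v.1) / (w (2*n+1) ^ v.1 - 1) with hG
  have hterm : ∀ k, Dmat (2*n+1) j k * Complex.exp (Complex.I * m * node (2*n+1) k)
      = Complex.I * Complex.exp (Complex.I * m * node (2*n+1) j) * G (j - k) := by
    intro k
    by_cases hk : j = k
    · subst hk
      simp [Dmat, hG]
    · have hjk0 : j - k ≠ 0 := sub_ne_zero.mpr hk
      rw [Dmat_eq rfl j k hk, node_exp n m j k, hG]
      simp only [if_neg hjk0]
      set v : ℕ := (j - k).val with hv
      have hcong := fin_sub_val_mod (2*n+1) j k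
      have h2 : w (2*n+1) ^ v = w (2*n+1) ^ ((j.1:ℤ) - (k.1:ℤ)) := by
        rw [← zpow_natCast (w (2*n+1)) v]
        exact w_zpow_eq hNz hcong
      have h1 : w (2*n+1) ^ (r * v)
          = w (2*n+1) ^ (((n:ℤ)+1) * ((j.1:ℤ) - k.1)) * w (2*n+1) ^ (m * ((k.1:ℤ) - j.1)) := by
        rw [← zpow_natCast (w (2*n+1)) (r*v), ← zpow_add₀ w_ne_zero]
        apply w_zpow_eq hNz
        have : ((r * v : ℕ) : ℤ) = (r:ℤ) * v := by push_cast; ring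
        rw [this, show ((n:ℤ)+1) * ((j.1:ℤ) - k.1) + m * ((k.1:ℤ) - j.1)
            = ((n:ℤ) + 1 - m) * ((j.1:ℤ) - k.1) by ring, ← hrval]
        rw [Int.mul_emod, hcong, ← Int.mul_emod]
      have hden : w (2*n+1) ^ v - 1 ≠ 0 := by
        rw [h2]
        apply sub_ne_zero.mpr
        apply w_zpow_ne_one hNz
        apply d_mod_ne_zero hNz
        · intro h; exact hk (Fin.ext (by omega))
        · have := j.2; have := k.2; omega
        · have := j.2; have := k.2; omega
      have hden2 : w (2*n+1) ^ ((j.1:ℤ) - (k.1:ℤ)) - 1 ≠ 0 := h2 ▸ hden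
      field_simp
      rw [h1, h2]
      ring
  rw [Finset.sum_congr rfl (fun k _ => hterm k), ← Finset.mul_sum]
  have hre : ∑ k : Fin (2*n+1), G (j - k) = ∑ v : Fin (2*n+1), G v :=
    Fintype.sum_equiv (Equiv.subLeft j) _ _ (fun k => rfl)
  rw [hre]
  have hsum : ∑ v : Fin (2*n+1), G v = F (2*n+1) r := by
    set H : ℕ → ℂ := fun e =>
      if e = 0 then 0 else w (2*n+1) ^ (r * e) / (w (2*n+1) ^ e - 1) with hH
    have hGH : ∀ v : Fin (2*n+1), G v = H v.1 := by
      intro v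
      simp only [hG, hH]
      exact if_congr (by rw [Fin.ext_iff, Fin.val_zero]) rfl rfl
    calc ∑ v : Fin (2*n+1), G v = ∑ v : Fin (2*n+1), H v.1 :=
          Finset.sum_congr rfl (fun v _ => hGH v)
      _ = ∑ e ∈ Finset.range (2*n+1), H e := Fin.sum_univ_eq_sum_range H _
      _ = F (2*n+1) r := by
          rw [Finset.range_eq_Ico, Finset.sum_eq_sum_Ico_succ_bot (by omega : 0 < 2*n+1)]
          have h0 : H 0 = 0 := by simp [hH]
          rw [h0, zero_add]
          unfold F
          apply Finset.sum_congr rfl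
          intro e he
          simp only [Finset.mem_Ico] at he
          simp only [hH]
          rw [if_neg (by omega)]
  rw [hsum, F_val n r (by omega) (by omega)]
  have hrc : (r : ℂ) = (n:ℂ) + 1 - m := by exact_mod_cast hrval
  rw [hrc]
  ring

lemma sum_helper_add (n : ℕ) (j : Fin (2*n+1)) (A B : Fin (2*n+1) → ℂ) :
    ∑ k, Dmat (2*n+1) j k * ((A k + B k) / 2)
      = ((∑ k, Dmat (2*n+1) j k * A k) + ∑ k, Dmat (2*n+1) j k * B k) / 2 := by
  rw [eq_div_iff (by norm_num : (2:ℂ) ≠ 0), Finset.sum_mul, ← Finset.sum_add_distrib]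
  exact Finset.sum_congr rfl (fun k _ => by ring)

lemma sum_helper_sub (n : ℕ) (j : Fin (2*n+1)) (A B : Fin (2*n+1) → ℂ) :
    ∑ k, Dmat (2*n+1) j k * ((A k - B k) * Complex.I / 2)
      = ((∑ k, Dmat (2*n+1) j k * A k) - ∑ k, Dmat (2*n+1) j k * B k) * Complex.I / 2 := by
  rw [eq_div_iff (by norm_num : (2:ℂ) ≠ 0), Finset.sum_mul, sub_mul, Finset.sum_mul,
    Finset.sum_mul, ← Finset.sum_sub_distrib]
  exact Finset.sum_congr rfl (fun k _ => by ring)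

lemma cos_expand (m : ℕ) (t : ℝ) : ((Real.cos (m * t) : ℝ) : ℂ)
    = (Complex.exp (Complex.I * (m:ℂ) * t) + Complex.exp (Complex.I * (-(m:ℂ)) * t)) / 2 := by
  have e1 : Complex.exp (Complex.I * (m:ℂ) * t) = Complex.exp (((m * t : ℝ):ℂ) * Complex.I) := by
    congr 1; push_cast; ring
  have e2 : Complex.exp (Complex.I * (-(m:ℂ)) * t)
      = Complex.exp (-((m * t : ℝ):ℂ) * Complex.I) := by
    congr 1; push_cast; ring
  rw [Complex.ofReal_cos, Complex.cos, e1, e2]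

lemma sin_expand (m : ℕ) (t : ℝ) : ((Real.sin (m * t) : ℝ) : ℂ)
    = (Complex.exp (Complex.I * (-(m:ℂ)) * t) - Complex.exp (Complex.I * (m:ℂ) * t))
        * Complex.I / 2 := by
  have e1 : Complex.exp (Complex.I * (m:ℂ) * t) = Complex.exp (((m * t : ℝ):ℂ) * Complex.I) := by
    congr 1; push_cast; ring
  have e2 : Complex.exp (Complex.I * (-(m:ℂ)) * t)
      = Complex.exp (-((m * t : ℝ):ℂ) * Complex.I) := by
    congr 1; push_cast; ring
  rw [Complex.ofReal_sin, Complex.sin, e1, e2]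

lemma sumD_cos (n : ℕ) (m : ℕ) (hm : m ≤ n) (j : Fin (2*n+1)) :
    ∑ k, Dmat (2*n+1) j k * ((Real.cos (m * node (2*n+1) k) : ℝ) : ℂ)
      = -(m:ℂ) * ((Real.sin (m * node (2*n+1) j) : ℝ) : ℂ) := by
  have kp := key n m (by omega) (by exact_mod_cast hm) j
  have kn := key n (-(m:ℤ)) (by omega) (by omega) j
  push_cast at kp kn
  simp only [cos_expand, sin_expand]
  rw [sum_helper_add n j _ _, kp, kn]
  ring

lemma sumD_sin (n : ℕ) (m : ℕ) (hm : m ≤ n) (j : Fin (2*n+1)) :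
    ∑ k, Dmat (2*n+1) j k * ((Real.sin (m * node (2*n+1) k) : ℝ) : ℂ)
      = (m:ℂ) * ((Real.cos (m * node (2*n+1) j) : ℝ) : ℂ) := by
  have kp := key n m (by omega) (by exact_mod_cast hm) j
  have kn := key n (-(m:ℤ)) (by omega) (by omega) j
  push_cast at kp kn
  simp only [cos_expand, sin_expand]
  rw [sum_helper_sub n j _ _, kn, kp]
  linear_combination (-((m:ℂ) * Complex.exp (Complex.I * (-(m:ℂ)) * (node (2*n+1) j))
    + (m:ℂ) * Complex.exp (Complex.I * (m:ℂ) * (node (2*n+1) j))) / 2) * Complex.I_mul_I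

lemma hasDerivAt_trig (a b : ℕ → ℂ) (n : ℕ) (t : ℝ) :
    HasDerivAt (fun t : ℝ => a 0 + ∑ m ∈ Finset.Icc 1 n,
        (a m * ((Real.cos (m * t) : ℝ) : ℂ) + b m * ((Real.sin (m * t) : ℝ) : ℂ)))
      (∑ m ∈ Finset.Icc 1 n, (a m * (-(m:ℂ) * ((Real.sin (m * t) : ℝ) : ℂ))
        + b m * ((m:ℂ) * ((Real.cos (m * t) : ℝ) : ℂ)))) t := by
  apply HasDerivAt.const_add
  apply HasDerivAt.fun_sum
  intro m hm
  have hmul : HasDerivAt (fun t : ℝ => (m:ℝ) * t) (m:ℝ) t := by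
    simpa using (hasDerivAt_id t).const_mul (m:ℝ)
  have hcosR : HasDerivAt (fun t : ℝ => Real.cos ((m:ℝ) * t)) (-Real.sin ((m:ℝ)*t) * m) t :=
    (Real.hasDerivAt_cos ((m:ℝ)*t)).comp t hmul
  have hsinR : HasDerivAt (fun t : ℝ => Real.sin ((m:ℝ) * t)) (Real.cos ((m:ℝ)*t) * m) t :=
    (Real.hasDerivAt_sin ((m:ℝ)*t)).comp t hmul
  have h1 := (hcosR.ofReal_comp.const_mul (a m)).fun_add (hsinR.ofReal_comp.const_mul (b m))
  convert h1 using 1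
  push_cast
  ring

end TrigDiff

theorem deriv_samples_eq_mulVec (n : ℕ) (x : ℝ → ℂ) (hx : IsTrigPoly n x) :
    (fun j : Fin (2 * n + 1) => deriv x (node (2 * n + 1) j)) =
      (Dmat (2 * n + 1)).mulVec (fun j => x (node (2 * n + 1) j)) := by
  obtain ⟨a, b, hab⟩ := hx
  have hxeq : x = fun t => a 0 + ∑ m ∈ Finset.Icc 1 n,
      (a m * ((Real.cos (m * t) : ℝ) : ℂ) + b m * ((Real.sin (m * t) : ℝ) : ℂ)) := funext hab
  subst hxeq
  funext j
  rw [(TrigDiff.hasDerivAt_trig a b n (node (2*n+1) j)).deriv]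
  simp only [Matrix.mulVec, dotProduct]
  have hsplit : ∀ k, Dmat (2*n+1) j k * (a 0 + ∑ m ∈ Finset.Icc 1 n,
      (a m * ((Real.cos (m * node (2*n+1) k) : ℝ):ℂ)
        + b m * ((Real.sin (m * node (2*n+1) k):ℝ):ℂ)))
    = Dmat (2*n+1) j k * a 0 + ∑ m ∈ Finset.Icc 1 n,
      (a m * (Dmat (2*n+1) j k * ((Real.cos (m * node (2*n+1) k) : ℝ):ℂ))
        + b m * (Dmat (2*n+1) j k * ((Real.sin (m * node (2*n+1) k):ℝ):ℂ))) := by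
    intro k
    rw [mul_add, Finset.mul_sum]
    congr 1
    exact Finset.sum_congr rfl (fun m _ => by ring)
  have h0 : ∑ k, Dmat (2*n+1) j k = 0 := by
    have h00 := TrigDiff.sumD_cos n 0 (Nat.zero_le n) j
    simpa using h00
  have hzero : ∑ k, Dmat (2*n+1) j k * a 0 = 0 := by
    rw [← Finset.sum_mul, h0, zero_mul]
  rw [Finset.sum_congr rfl (fun k _ => hsplit k)]
  symm
  rw [Finset.sum_add_distrib, hzero, zero_add, Finset.sum_comm]
  apply Finset.sum_congr rfl
  intro m hm
  rw [Finset.sum_add_distrib, ← Finset.mul_sum, ← Finset.mul_sum,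
    TrigDiff.sumD_cos n m (Finset.mem_Icc.mp hm).2 j,
    TrigDiff.sumD_sin n m (Finset.mem_Icc.mp hm).2 j]
end

section
/- Let N = 2n+1 be odd and D the equispaced trigonometric differentiation matrix. If x(t) is a trigonometric polynomial of degree at most n, then for every k ≥ 0 the vector of k-th derivative values (x^{(k)}(t_1), …, x^{(k)}(t_N)) equals D^k applied to the vector (x(t_1), …, x(t_N)). -/
open Real Finset

open Complex


noncomputable def Eh (N : ℕ) (a : ℤ) : ℂ := Complex.exp (π * a / N * I)
noncomputable def Wc (N : ℕ) (a : ℤ) : ℂ := Eh N (2 * a)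

lemma Eh_add (N : ℕ) (a b : ℤ) : Eh N (a + b) = Eh N a * Eh N b := by
  rw [Eh, Eh, Eh, ← Complex.exp_add]
  congr 1
  push_cast
  ring

lemma Eh_zero (N : ℕ) : Eh N 0 = 1 := by simp [Eh]

lemma Eh_ne_zero (N : ℕ) (a : ℤ) : Eh N a ≠ 0 := Complex.exp_ne_zero _

lemma Eh_neg_mul (N : ℕ) (a : ℤ) : Eh N (-a) * Eh N a = 1 := by
  rw [← Eh_add]; simp [Eh_zero]

lemma Wc_period (N : ℕ) (hN : 0 < N) (a q : ℤ) : Wc N (a + N * q) = Wc N a := by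
  rw [Wc, Wc, mul_add, Eh_add]
  have h : Eh N (2 * (N * q)) = 1 := by
    rw [Eh]
    have hN' : (N : ℂ) ≠ 0 := Nat.cast_ne_zero.mpr hN.ne'
    have : (π : ℂ) * ((2 * ((N:ℤ) * q) : ℤ) : ℂ) / N * I = q * (2 * π * I) := by
      push_cast
      field_simp
    rw [this, Complex.exp_int_mul_two_pi_mul_I]
  rw [h, mul_one]

lemma Wc_pow (N : ℕ) (a : ℤ) (p : ℕ) : Wc N a ^ p = Wc N (a * p) := by
  induction p with
  | zero => norm_num [Wc, Eh]
  | succ p ih =>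
    rw [pow_succ, ih, Wc, Wc, Wc, ← Eh_add]
    congr 1
    push_cast
    ring

lemma Wc_ne_one (N : ℕ) (r : ℤ) (h1 : 0 < r) (h2 : r < N) : Wc N r ≠ 1 := by
  intro h
  rw [Wc, Eh, Complex.exp_eq_one_iff] at h
  obtain ⟨q, hq⟩ := h
  have hN : (0:ℤ) < N := lt_trans h1 h2
  have hN' : (N : ℂ) ≠ 0 := Nat.cast_ne_zero.mpr (by exact_mod_cast hN.ne')
  have hpi : (π : ℂ) ≠ 0 := Complex.ofReal_ne_zero.mpr Real.pi_ne_zero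
  have hI : (I : ℂ) ≠ 0 := Complex.I_ne_zero
  field_simp at hq
  have hq' : ((π:ℂ)*I) * ((2*r:ℤ):ℂ) = ((π:ℂ)*I) * ((2*(q*N):ℤ):ℂ) := by
    push_cast
    push_cast at hq; linear_combination ((π:ℂ) * I) * hq
  have key := mul_left_cancel₀ (mul_ne_zero hpi hI) hq' 
  have h2' : (2 * r : ℤ) = 2 * (q * N) := by exact_mod_cast key
  have h3 : r = q * N := by omega
  have hq0 : (1:ℤ) ≤ q := by nlinarith
  have h4 : (N:ℤ) ≤ q * N := le_mul_of_one_le_left hN.le hq0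
  omega

lemma sum_Wc_eq_neg_one (N : ℕ) (r : ℤ) (h1 : 0 < r) (h2 : r < N) :
    ∑ p ∈ Finset.Icc 1 (N - 1), Wc N (r * p) = -1 := by
  have hN : 0 < N := by exact_mod_cast lt_trans h1 h2
  have hz : Wc N r ≠ 1 := Wc_ne_one N r h1 h2
  have hgeom : ∑ p ∈ Finset.range N, Wc N r ^ p = 0 := by
    rw [geom_sum_eq hz]
    rw [Wc_pow, show (r * (N:ℕ) : ℤ) = 0 + N * r by ring, Wc_period N hN,
      show Wc N 0 = 1 by norm_num [Wc, Eh]]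
    simp
  have hsplit : ∑ p ∈ Finset.range N, Wc N r ^ p
      = Wc N r ^ 0 + ∑ p ∈ Finset.Icc 1 (N - 1), Wc N r ^ p := by
    have h0 : (0 : ℕ) ∈ Finset.range N := by simp [hN]
    rw [← Finset.add_sum_erase _ _ h0]
    congr 1
    apply Finset.sum_congr _ (fun _ _ => rfl)
    ext q
    simp only [Finset.mem_erase, Finset.mem_range, Finset.mem_Icc]
    omega
  have : ∑ p ∈ Finset.Icc 1 (N - 1), Wc N r ^ p = -1 := by
    rw [hsplit] at hgeom
    simp at hgeom
    linear_combination hgeom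
  rw [← this]
  apply Finset.sum_congr rfl
  intro p _
  rw [← Wc_pow]

lemma Wc_ne_zero (N : ℕ) (a : ℤ) : Wc N a ≠ 0 := Eh_ne_zero _ _

lemma Wc_neg (N : ℕ) (p : ℤ) : Wc N (-p) = (Wc N p)⁻¹ := by
  have h : Wc N (-p) * Wc N p = 1 := by
    rw [Wc, Wc, ← Eh_add]; norm_num [Eh_zero]
  exact eq_inv_of_mul_eq_one_left h

lemma sum_inv_one_sub_Wc (n : ℕ) :
    ∑ p ∈ Finset.Icc 1 (2 * n), (1 - Wc (2 * n + 1) p)⁻¹ = (n : ℂ) := by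
  set N : ℕ := 2 * n + 1 with hNdef
  have hN : 0 < N := by omega
  have hne : ∀ p : ℕ, p ∈ Finset.Icc 1 (2 * n) → Wc N p ≠ 1 := by
    intro p hp
    simp only [Finset.mem_Icc] at hp
    exact Wc_ne_one N p (by exact_mod_cast hp.1) (by exact_mod_cast (by omega : p < N))
  have hflip : ∑ p ∈ Finset.Icc 1 (2 * n), (1 - Wc N p)⁻¹
      = ∑ p ∈ Finset.Icc 1 (2 * n), (1 - Wc N ((N:ℤ) - p))⁻¹ := by
    apply Finset.sum_nbij' (fun p => N - p) (fun p => N - p)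
    · intro a ha; simp only [Finset.mem_Icc] at ha ⊢; omega
    · intro a ha; simp only [Finset.mem_Icc] at ha ⊢; omega
    · intro a ha; simp only [Finset.mem_Icc] at ha; omega
    · intro a ha; simp only [Finset.mem_Icc] at ha; omega
    · intro a ha
      simp only [Finset.mem_Icc] at ha
      congr 3
      omega
  have hpair : ∀ p ∈ Finset.Icc 1 (2 * n),
      (1 - Wc N p)⁻¹ + (1 - Wc N ((N:ℤ) - p))⁻¹ = 1 := by
    intro p hp
    simp only [Finset.mem_Icc] at hp
    have hW : Wc N ((N:ℤ) - p) = Wc N (-(p:ℤ)) := by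
      rw [show ((N:ℤ) - p) = -(p:ℤ) + (N:ℤ) * 1 by ring, Wc_period N hN]
    rw [hW, Wc_neg]
    have hz1 : Wc N p ≠ 1 := hne p (by simp only [Finset.mem_Icc]; omega)
    have hz0 : Wc N p ≠ 0 := Wc_ne_zero _ _
    have h1z : (1 : ℂ) - Wc N p ≠ 0 := sub_ne_zero.mpr (Ne.symm hz1)
    have h2z : (1 : ℂ) - (Wc N p)⁻¹ ≠ 0 := by
      rw [sub_ne_zero]
      intro h
      apply hz1
      rw [← inv_inv (Wc N p), ← h, inv_one]
    have key : (1 : ℂ) - (Wc N p)⁻¹ = -(1 - Wc N p) * (Wc N p)⁻¹ := by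
      field_simp
      ring
    rw [key, mul_inv, inv_inv, inv_neg]
    rw [show (1 - Wc N ↑p)⁻¹ + -(1 - Wc N ↑p)⁻¹ * Wc N ↑p
        = (1 - Wc N ↑p)⁻¹ * (1 - Wc N ↑p) by ring, inv_mul_cancel₀ h1z]
  have h2 : (2 : ℂ) * ∑ p ∈ Finset.Icc 1 (2 * n), (1 - Wc N p)⁻¹ = 2 * n := by
    calc (2:ℂ) * ∑ p ∈ Finset.Icc 1 (2 * n), (1 - Wc N p)⁻¹
        = ∑ p ∈ Finset.Icc 1 (2 * n), ((1 - Wc N p)⁻¹ + (1 - Wc N ((N:ℤ) - p))⁻¹) := by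
          rw [Finset.sum_add_distrib, ← hflip]; ring
      _ = ∑ p ∈ Finset.Icc 1 (2 * n), (1 : ℂ) := Finset.sum_congr rfl hpair
      _ = 2 * n := by
          rw [Finset.sum_const, Nat.card_Icc]
          push_cast
          ring
  linear_combination h2 / 2

lemma U_formula_aux (n : ℕ) : ∀ d : ℕ, d ≤ 2 * n →
    ∑ p ∈ Finset.Icc 1 (2 * n), Wc (2 * n + 1) ((2 * n + 1 - d : ℤ) * p)
      * (1 - Wc (2 * n + 1) p)⁻¹ = ((2 * n + 1 - d : ℤ) : ℂ) - (n + 1) := by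
  set N : ℕ := 2 * n + 1 with hNdef
  have hN : 0 < N := by omega
  intro d
  induction d with
  | zero =>
    intro _
    simp only [Nat.cast_zero]
    have hone : ∀ p ∈ Finset.Icc 1 (2 * n), Wc N ((2 * n + 1 - 0 : ℤ) * p)
        * (1 - Wc N p)⁻¹ = (1 - Wc N p)⁻¹ := by
      intro p _
      have : ((2 * n + 1 - 0 : ℤ) * p) = 0 + (N : ℤ) * p := by push_cast [hNdef]; ring
      rw [this, Wc_period N hN, show Wc N 0 = 1 by norm_num [Wc, Eh], one_mul]
    rw [Finset.sum_congr rfl hone, sum_inv_one_sub_Wc]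
    push_cast
    ring
  | succ d ih =>
    intro hd
    simp only [Nat.cast_add, Nat.cast_one]
    have ih' := ih (by omega)
    have hr1 : (0 : ℤ) < 2 * n + 1 - (d + 1) := by omega
    have hr2 : (2 * n + 1 - (d + 1) : ℤ) < N := by push_cast; omega
    have hterm : ∀ p ∈ Finset.Icc 1 (2 * n),
        Wc N ((2 * n + 1 - (d + 1) : ℤ) * p) * (1 - Wc N p)⁻¹
        = Wc N ((2 * n + 1 - d : ℤ) * p) * (1 - Wc N p)⁻¹
          + Wc N ((2 * n + 1 - (d + 1) : ℤ) * p) := by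
      intro p hp
      simp only [Finset.mem_Icc] at hp
      have hz1 : Wc N p ≠ 1 := Wc_ne_one N p (by exact_mod_cast hp.1)
        (by exact_mod_cast (by omega : p < N))
      have h1z : (1 : ℂ) - Wc N p ≠ 0 := sub_ne_zero.mpr (Ne.symm hz1)
      have hsplit : Wc N ((2 * n + 1 - d : ℤ) * p)
          = Wc N ((2 * n + 1 - (d + 1) : ℤ) * p) * Wc N p := by
        rw [Wc, Wc, Wc, ← Eh_add]
        congr 1
        ring
      rw [hsplit]; field_simp
      ring
    have hs := sum_Wc_eq_neg_one N _ hr1 hr2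
    rw [show N - 1 = 2 * n by omega] at hs
    rw [Finset.sum_congr rfl hterm, Finset.sum_add_distrib, ih', hs]
    push_cast
    ring

lemma U_formula (n : ℕ) (r : ℤ) (h1 : 1 ≤ r) (h2 : r ≤ 2 * n + 1) :
    ∑ p ∈ Finset.Icc 1 (2 * n), Wc (2 * n + 1) (r * p)
      * (1 - Wc (2 * n + 1) p)⁻¹ = (r : ℂ) - (n + 1) := by
  have hd : (2 * n + 1 - (2 * n + 1 - r).toNat : ℤ) = r := by omega
  have := U_formula_aux n (2 * n + 1 - r).toNat (by omega)
  rw [hd] at this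
  exact this

lemma div_inv_helper (A B s t : ℂ) (hs : s ≠ 0) (ht : t ≠ 0)
    (h : A * t = I * B * s) : A * s⁻¹ = I * (B * t⁻¹) := by
  field_simp
  linear_combination h

lemma eigen_scalar (n : ℕ) (m : ℤ) (hm1 : -(n:ℤ) ≤ m) (hm2 : m ≤ n) :
    ∑ p ∈ Finset.Icc 1 (2 * n), (-(-1:ℂ)^p) * Wc (2*n+1) (m*p)
      * (2 * ((Real.sin (π * p / ((2*n+1 : ℕ) : ℝ)) : ℝ) : ℂ))⁻¹ = I * m := by
  set N : ℕ := 2 * n + 1 with hNdef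
  have hN : 0 < N := by omega
  have hNne : (N : ℂ) ≠ 0 := Nat.cast_ne_zero.mpr hN.ne'
  have hterm : ∀ p ∈ Finset.Icc 1 (2 * n),
      (-(-1:ℂ)^p) * Wc N (m*p) * (2 * ((Real.sin (π * p / (N : ℝ)) : ℝ) : ℂ))⁻¹
      = I * (Wc N ((n+1+m)*p) * (1 - Wc N p)⁻¹) := by
    intro p hp
    simp only [Finset.mem_Icc] at hp
    have hz1 : Wc N p ≠ 1 := Wc_ne_one N p (by exact_mod_cast hp.1)
      (by exact_mod_cast (by omega : p < N))
    have ht0 : (1 : ℂ) - Wc N p ≠ 0 := sub_ne_zero.mpr (Ne.symm hz1)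
    have hp0 : (0:ℝ) < p := by exact_mod_cast hp.1
    have hNR : (0:ℝ) < (N:ℝ) := by exact_mod_cast hN
    have hsinpos : 0 < Real.sin (π * p / N) := by
      apply Real.sin_pos_of_pos_of_lt_pi
      · exact div_pos (mul_pos Real.pi_pos hp0) hNR
      · rw [div_lt_iff₀ hNR]
        have : (p : ℝ) < N := by exact_mod_cast (by omega : p < N)
        nlinarith [Real.pi_pos]
    have hs0 : (2 * ((Real.sin (π * p / N) : ℝ) : ℂ)) ≠ 0 := by
      simp only [ne_eq, mul_eq_zero, Complex.ofReal_eq_zero]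
      push_neg
      exact ⟨two_ne_zero, hsinpos.ne'⟩
    have hsinE : (2 * ((Real.sin (π * p / N) : ℝ) : ℂ))
        = (Eh N (-(p:ℤ)) - Eh N p) * I := by
      rw [Complex.ofReal_sin]
      rw [show Complex.sin ((π * p / N : ℝ) : ℂ)
        = (Complex.exp (-((π * p / N : ℝ) : ℂ)*I) - Complex.exp (((π * p / N : ℝ) : ℂ)*I)) * I / 2 from rfl]
      have e1 : Complex.exp (-((π * p / N : ℝ) : ℂ)*I) = Eh N (-(p:ℤ)) := by
        rw [Eh]; congr 1; push_cast; ring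
      have e2 : Complex.exp (((π * p / N : ℝ) : ℂ)*I) = Eh N (p:ℤ) := by
        rw [Eh]; congr 1; push_cast; ring
      rw [e1, e2]
      ring
    have hE : Eh N (-(p:ℤ)) - Eh N p = Eh N (-(p:ℤ)) * (1 - Wc N p) := by
      rw [Wc, mul_sub, mul_one, ← Eh_add, show -(p:ℤ) + 2*p = (p:ℤ) by ring]
    have hpow : ((-1:ℂ))^p = Eh N ((N:ℤ)*p) := by
      rw [Eh, show (π:ℂ) * (((N:ℤ)*(p:ℤ) : ℤ) : ℂ) / (N:ℂ) * I
          = ((N:ℂ)/(N:ℂ)) * ((p:ℂ) * (π * I)) by push_cast; ring,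
        div_self hNne, one_mul, Complex.exp_nat_mul, Complex.exp_pi_mul_I]
    have h5 : Eh N ((N:ℤ)*p) * Wc N (m*p) = Wc N (((n:ℤ)+1+m)*p) * Eh N (-(p:ℤ)) := by
      rw [Wc, Wc, ← Eh_add, ← Eh_add]
      congr 1
      push_cast [hNdef]
      ring
    have hAB : (-(-1:ℂ)^p) * Wc N (m*p) * (1 - Wc N p)
        = I * Wc N ((n+1+m)*p) * (2 * ((Real.sin (π * p / N) : ℝ) : ℂ)) := by
      rw [hsinE, hE, hpow]
      rw [show I * Wc N (((n:ℤ)+1+m)*p) * (Eh N (-(p:ℤ)) * (1 - Wc N (p:ℤ)) * I)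
          = (I*I) * (Wc N (((n:ℤ)+1+m)*p) * Eh N (-(p:ℤ)) * (1 - Wc N (p:ℤ))) by ring,
        Complex.I_mul_I]
      linear_combination (-(1 - Wc N (p:ℤ))) * h5
    exact div_inv_helper _ _ _ _ hs0 ht0 hAB
  rw [Finset.sum_congr rfl hterm, ← Finset.mul_sum,
    U_formula n ((n:ℤ)+1+m) (by omega) (by omega)]
  push_cast
  ring

lemma range_sum_split (N : ℕ) (hN : 0 < N) (f : ℕ → ℂ) :
    ∑ q ∈ Finset.range N, f q = f 0 + ∑ q ∈ Finset.Icc 1 (N - 1), f q := by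
  have h0 : (0 : ℕ) ∈ Finset.range N := by simp [hN]
  rw [← Finset.add_sum_erase _ _ h0]
  congr 1
  apply Finset.sum_congr _ (fun _ _ => rfl)
  ext q
  simp only [Finset.mem_erase, Finset.mem_range, Finset.mem_Icc]
  omega

lemma node_shift (n : ℕ) (m : ℤ) (j p : Fin (2*n+1)) :
    Complex.exp (I * m * (node (2*n+1) (p + j) : ℝ))
      = Wc (2*n+1) (m * p.1) * Complex.exp (I * m * (node (2*n+1) j : ℝ)) := by
  have hNne : ((2*n+1 : ℕ) : ℂ) ≠ 0 := Nat.cast_ne_zero.mpr (by omega)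
  have hval : ((p + j : Fin (2*n+1)).1) = (p.1 + j.1) % (2*n+1) := rfl
  have hlt2 : p.1 + j.1 < 2 * (2*n+1) := by omega
  rcases Nat.lt_or_ge (p.1 + j.1) (2*n+1) with h | h
  · have hval2 : ((p + j : Fin (2*n+1)).1) = p.1 + j.1 := by
      rw [hval, Nat.mod_eq_of_lt h]
    rw [Wc, Eh, ← Complex.exp_add]
    congr 1
    rw [node, node, hval2]
    push_cast
    field_simp
    ring
  · have hval2 : ((p + j : Fin (2*n+1)).1) = p.1 + j.1 - (2*n+1) := by
      rw [hval, Nat.mod_eq_sub_mod h, Nat.mod_eq_of_lt (by omega)]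
    have harg : I * m * ((node (2*n+1) (p + j) : ℝ) : ℂ)
        = ((π : ℂ) * ((2 * (m * p.1) : ℤ) : ℂ) / ((2*n+1 : ℕ) : ℂ) * I
            + I * m * ((node (2*n+1) j : ℝ) : ℂ))
          + ((-m : ℤ) : ℂ) * (2 * π * I) := by
      rw [node, node, hval2]
      have hcast : ((p.1 + j.1 - (2*n+1) : ℕ) : ℝ) = (p.1 : ℝ) + j.1 - (2*n+1) := by
        push_cast [Nat.cast_sub h]
        ring
      have hc : (2*(n:ℂ)+1) ≠ 0 := by
        intro hcon
        apply hNne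
        push_cast
        linear_combination hcon
      push_cast [hcast]
      field_simp [hc]
      ring
    rw [harg, Complex.exp_add, Complex.exp_int_mul_two_pi_mul_I, mul_one,
      Complex.exp_add, Wc, Eh]

lemma Dmat_entry (n : ℕ) (j p : Fin (2*n+1)) (hp : p ≠ 0) :
    Dmat (2*n+1) j (p + j)
      = (-(-1:ℂ)^(p.1)) * (2 * ((Real.sin (π * p.1 / ((2*n+1 : ℕ) : ℝ)) : ℝ) : ℂ))⁻¹ := by
  have hNR : (0:ℝ) < ((2*n+1 : ℕ) : ℝ) := by positivity
  have hne : j ≠ p + j := by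
    intro h
    apply hp
    have : p + j = 0 + j := by rw [zero_add, ← h]
    exact add_right_cancel this
  rw [Dmat]
  rw [if_neg hne]
  have hval : ((p + j : Fin (2*n+1)).1) = (p.1 + j.1) % (2*n+1) := rfl
  rcases Nat.lt_or_ge (p.1 + j.1) (2*n+1) with h | h
  · have hval2 : ((p + j : Fin (2*n+1)).1) = p.1 + j.1 := by
      rw [hval, Nat.mod_eq_of_lt h]
    have hsin : Real.sin (π * ((j.1 : ℝ) - (((p + j : Fin (2*n+1)).1 : ℕ) : ℝ)) / ((2*n+1 : ℕ) : ℝ))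
        = -Real.sin (π * p.1 / ((2*n+1 : ℕ) : ℝ)) := by
      rw [hval2, show π * ((j.1 : ℝ) - ((p.1 + j.1 : ℕ) : ℝ)) / ((2*n+1 : ℕ) : ℝ)
        = -(π * p.1 / ((2*n+1 : ℕ) : ℝ)) by push_cast; ring, Real.sin_neg]
    have hpow : (-1:ℂ)^(j.1 + (p + j : Fin (2*n+1)).1) = (-1:ℂ)^(p.1) := by
      rw [hval2, show j.1 + (p.1 + j.1) = 2*j.1 + p.1 by ring, pow_add, pow_mul]
      norm_num
    rw [hsin, hpow]
    push_cast
    rw [div_eq_mul_inv]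
    rw [mul_neg, inv_neg]
    ring
  · have hval2 : ((p + j : Fin (2*n+1)).1) = p.1 + j.1 - (2*n+1) := by
      rw [hval, Nat.mod_eq_sub_mod h, Nat.mod_eq_of_lt (by omega)]
    have hsin : Real.sin (π * ((j.1 : ℝ) - (((p + j : Fin (2*n+1)).1 : ℕ) : ℝ)) / ((2*n+1 : ℕ) : ℝ))
        = Real.sin (π * p.1 / ((2*n+1 : ℕ) : ℝ)) := by
      have hcast : (((p.1 + j.1 - (2*n+1) : ℕ)) : ℝ) = (p.1 : ℝ) + j.1 - (2*n+1) := by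
        push_cast [Nat.cast_sub h]
        ring
      rw [hval2, hcast,
        show π * ((j.1 : ℝ) - ((p.1 : ℝ) + j.1 - (2*n+1))) / ((2*n+1 : ℕ) : ℝ)
          = π - π * p.1 / ((2*n+1 : ℕ) : ℝ) by push_cast; field_simp; ring,
        Real.sin_pi_sub]
    have hNodd : (-1:ℂ)^(2*n+1) = -1 := Odd.neg_one_pow ⟨n, by omega⟩
    have key : (-1:ℂ)^(j.1 + (p + j : Fin (2*n+1)).1) * (-1:ℂ)^(2*n+1)
        = (-1:ℂ)^(2*j.1 + p.1) := by
      rw [← pow_add]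
      congr 1
      omega
    have h2 : (-1:ℂ)^(2*j.1 + p.1) = (-1:ℂ)^(p.1) := by
      rw [pow_add, pow_mul]; norm_num
    rw [hNodd, h2] at key
    have hpow : (-1:ℂ)^(j.1 + (p + j : Fin (2*n+1)).1) = -(-1:ℂ)^(p.1) := by
      linear_combination -key
    rw [hsin, hpow]
    rw [div_eq_mul_inv]

lemma mulVec_exp (n : ℕ) (m : ℤ) (hm1 : -(n:ℤ) ≤ m) (hm2 : m ≤ n) :
    (Dmat (2*n+1)).mulVec (fun j => Complex.exp (I * m * (node (2*n+1) j : ℝ)))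
    = fun j => I * m * Complex.exp (I * m * (node (2*n+1) j : ℝ)) := by
  funext j
  show ∑ k, Dmat (2*n+1) j k * Complex.exp (I * m * (node (2*n+1) k : ℝ)) = _
  set F : ℕ → ℂ := fun q => (-(-1:ℂ)^q) * Wc (2*n+1) (m*q)
    * (2 * ((Real.sin (π * q / ((2*n+1 : ℕ) : ℝ)) : ℝ) : ℂ))⁻¹ with hF
  have hre : ∑ k, Dmat (2*n+1) j k * Complex.exp (I * m * (node (2*n+1) k : ℝ))
      = ∑ p, Dmat (2*n+1) j (p + j) * Complex.exp (I * m * (node (2*n+1) (p + j) : ℝ)) :=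
    (Fintype.sum_equiv (Equiv.addRight j)
      (fun p => Dmat (2*n+1) j (p + j) * Complex.exp (I * m * (node (2*n+1) (p + j) : ℝ)))
      _ (fun p => rfl)).symm
  have hterm : ∀ p : Fin (2*n+1),
      Dmat (2*n+1) j (p + j) * Complex.exp (I * m * (node (2*n+1) (p + j) : ℝ))
      = F p.1 * Complex.exp (I * m * (node (2*n+1) j : ℝ)) := by
    intro p
    by_cases hp : p = 0
    · subst hp
      rw [zero_add]
      simp only [Dmat, if_pos rfl, zero_mul, hF]
      norm_num
    · rw [Dmat_entry n j p hp, node_shift]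
      rw [hF]
      ring
  rw [hre, Finset.sum_congr rfl (fun p _ => hterm p)]
  rw [show ∑ p : Fin (2*n+1), F p.1 * Complex.exp (I * m * (node (2*n+1) j : ℝ))
      = (∑ q ∈ Finset.range (2*n+1), F q) * Complex.exp (I * m * (node (2*n+1) j : ℝ)) by
    rw [Finset.sum_mul, ← Fin.sum_univ_eq_sum_range]]
  rw [range_sum_split (2*n+1) (by omega) F, show (2*n+1) - 1 = 2*n by omega]
  have hF0 : F 0 = 0 := by
    rw [hF]
    norm_num
  rw [hF0, zero_add, hF, eigen_scalar n m hm1 hm2]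

lemma pow_mulVec_exp (n : ℕ) (m : ℤ) (hm1 : -(n:ℤ) ≤ m) (hm2 : m ≤ n) (k : ℕ) :
    ((Dmat (2*n+1)) ^ k).mulVec (fun j => Complex.exp (I * m * (node (2*n+1) j : ℝ)))
    = fun j => (I * m)^k * Complex.exp (I * m * (node (2*n+1) j : ℝ)) := by
  induction k with
  | zero =>
    rw [pow_zero, Matrix.one_mulVec]
    funext j
    rw [pow_zero, one_mul]
  | succ k ih =>
    rw [pow_succ, ← Matrix.mulVec_mulVec, mulVec_exp n m hm1 hm2]
    have hsmul : (fun j => I * (m:ℂ) * Complex.exp (I * m * (node (2*n+1) j : ℝ)))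
        = (I * (m:ℂ)) • (fun j => Complex.exp (I * m * (node (2*n+1) j : ℝ))) := by
      funext j
      simp [smul_eq_mul]
    rw [hsmul, Matrix.mulVec_smul, ih]
    funext j
    simp only [Pi.smul_apply, smul_eq_mul]
    ring

lemma hasDerivAt_cexp_mul (c : ℂ) (t : ℝ) :
    HasDerivAt (fun s : ℝ => Complex.exp (c * s)) (c * Complex.exp (c * t)) t := by
  have h := (((hasDerivAt_id ((t : ℝ) : ℂ)).const_mul c).cexp).comp_ofReal
  simpa [mul_comm] using h

lemma iteratedDeriv_exp_sum (s : Finset ℤ) (k : ℕ) : ∀ c : ℤ → ℂ,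
    iteratedDeriv k (fun t : ℝ => ∑ m ∈ s, c m * Complex.exp (I * m * t))
      = fun t : ℝ => ∑ m ∈ s, c m * (I * m)^k * Complex.exp (I * m * t) := by
  induction k with
  | zero =>
    intro c
    funext t
    rw [iteratedDeriv_zero]
    apply Finset.sum_congr rfl
    intro m _
    rw [pow_zero, mul_one]
  | succ k ih =>
    intro c
    rw [iteratedDeriv_succ']
    have hderiv : deriv (fun t : ℝ => ∑ m ∈ s, c m * Complex.exp (I * m * t))
        = fun t : ℝ => ∑ m ∈ s, (c m * (I * m)) * Complex.exp (I * m * t) := by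
      funext t
      rw [deriv_fun_sum (fun (m : ℤ) _ => ((hasDerivAt_cexp_mul (I * m) t).const_mul (c m)).differentiableAt)]
      apply Finset.sum_congr rfl
      intro m _
      rw [((hasDerivAt_cexp_mul (I * m) t).const_mul (c m)).deriv]
      ring
    rw [hderiv, ih (fun m : ℤ => c m * (I * m))]
    funext t
    apply Finset.sum_congr rfl
    intro m _
    ring

lemma sum_Icc_neg (n : ℕ) (F : ℤ → ℂ) :
    ∑ m ∈ Finset.Icc (-(n:ℤ)) n, F m
      = F 0 + ∑ m ∈ Finset.Icc 1 n, (F m + F (-(m:ℤ))) := by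
  induction n with
  | zero => simp
  | succ n ih =>
    have h1 : Finset.Icc (-((n+1:ℕ):ℤ)) ((n+1:ℕ):ℤ)
        = insert (-((n+1:ℕ):ℤ)) (insert (((n+1:ℕ):ℤ)) (Finset.Icc (-(n:ℤ)) (n:ℤ))) := by
      ext a
      simp only [Finset.mem_Icc, Finset.mem_insert]
      push_cast
      omega
    have h2 : Finset.Icc 1 (n+1) = insert (n+1) (Finset.Icc 1 n) := by
      ext a
      simp only [Finset.mem_Icc, Finset.mem_insert]
      omega
    have hm1 : -((n+1:ℕ):ℤ) ∉ insert (((n+1:ℕ):ℤ)) (Finset.Icc (-(n:ℤ)) (n:ℤ)) := by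
      simp only [Finset.mem_insert, Finset.mem_Icc]
      push_cast
      omega
    have hm2 : (((n+1:ℕ):ℤ)) ∉ Finset.Icc (-(n:ℤ)) (n:ℤ) := by
      simp only [Finset.mem_Icc]
      push_cast
      omega
    have hm3 : (n+1) ∉ Finset.Icc 1 n := by
      simp only [Finset.mem_Icc]
      omega
    rw [h1, Finset.sum_insert hm1, Finset.sum_insert hm2, ih, h2, Finset.sum_insert hm3]
    push_cast
    ring

lemma trig_to_exp (n : ℕ) (x : ℝ → ℂ) (hx : IsTrigPoly n x) :
    ∃ c : ℤ → ℂ, ∀ t : ℝ,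
      x t = ∑ m ∈ Finset.Icc (-(n:ℤ)) n, c m * Complex.exp (I * m * t) := by
  obtain ⟨a, b, hab⟩ := hx
  refine ⟨fun m => if m = 0 then a 0 else if 0 < m then (a m.toNat - I * b m.toNat)/2
    else (a (-m).toNat + I * b (-m).toNat)/2, fun t => ?_⟩
  set c : ℤ → ℂ := fun m => if m = 0 then a 0 else if 0 < m then (a m.toNat - I * b m.toNat)/2
    else (a (-m).toNat + I * b (-m).toNat)/2 with hc
  rw [hab t, sum_Icc_neg n (fun m => c m * Complex.exp (I * m * t))]
  congr 1
  · simp [hc]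
  · apply Finset.sum_congr rfl
    intro m hm
    simp only [Finset.mem_Icc] at hm
    have hmz : ((m:ℤ)) ≠ 0 := by omega
    have hmp : (0:ℤ) < m := by omega
    have hcm : c (m:ℤ) = (a m - I * b m)/2 := by
      rw [hc]
      simp only [if_neg hmz, if_pos hmp, Int.toNat_natCast]
    have hcm' : c (-(m:ℤ)) = (a m + I * b m)/2 := by
      rw [hc]
      simp only [neg_eq_zero, neg_neg, if_neg hmz, Int.toNat_natCast,
        if_neg (by omega : ¬ (0:ℤ) < -(m:ℤ))]
    have hcos : ((Real.cos (m * t) : ℝ) : ℂ)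
        = (Complex.exp (I * ((m:ℤ):ℂ) * t) + Complex.exp (I * ((-(m:ℤ) : ℤ):ℂ) * t))/2 := by
      rw [Complex.ofReal_cos,
        show Complex.cos ((m * t : ℝ) : ℂ)
          = (Complex.exp (((m * t : ℝ) : ℂ) * I) + Complex.exp (-((m * t : ℝ) : ℂ) * I))/2 from rfl]
      congr 3
      · push_cast; ring
      · push_cast; ring
    have hsin : ((Real.sin (m * t) : ℝ) : ℂ)
        = (Complex.exp (I * ((-(m:ℤ) : ℤ):ℂ) * t) - Complex.exp (I * ((m:ℤ):ℂ) * t)) * I / 2 := by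
      rw [Complex.ofReal_sin,
        show Complex.sin ((m * t : ℝ) : ℂ)
          = (Complex.exp (-((m * t : ℝ) : ℂ) * I) - Complex.exp (((m * t : ℝ) : ℂ) * I)) * I / 2 from rfl]
      congr 4
      · push_cast; ring
      · push_cast; ring
    rw [hcm, hcm', hcos, hsin]
    have hI2 : (I:ℂ) * I = -1 := Complex.I_mul_I
    ring

theorem iterated_deriv_samples_eq_pow_mulVec (n : ℕ) (x : ℝ → ℂ)
    (hx : IsTrigPoly n x) (k : ℕ) :
    (fun j : Fin (2 * n + 1) => iteratedDeriv k x (node (2 * n + 1) j)) =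
      ((Dmat (2 * n + 1)) ^ k).mulVec (fun j => x (node (2 * n + 1) j)) := by
  obtain ⟨c, hc⟩ := trig_to_exp n x hx
  have hxeq : x = fun t : ℝ => ∑ m ∈ Finset.Icc (-(n:ℤ)) n, c m * Complex.exp (I * m * t) :=
    funext hc
  funext j
  -- LHS
  rw [hxeq, iteratedDeriv_exp_sum]
  -- RHS
  show ∑ m ∈ Finset.Icc (-(n:ℤ)) n, c m * (I * m)^k
      * Complex.exp (I * m * (node (2*n+1) j : ℝ))
    = ∑ i : Fin (2*n+1), ((Dmat (2*n+1))^k) j i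
      * (∑ m ∈ Finset.Icc (-(n:ℤ)) n, c m * Complex.exp (I * m * (node (2*n+1) i : ℝ)))
  have hswap : ∑ i : Fin (2*n+1), ((Dmat (2*n+1))^k) j i
      * (∑ m ∈ Finset.Icc (-(n:ℤ)) n, c m * Complex.exp (I * m * (node (2*n+1) i : ℝ)))
      = ∑ m ∈ Finset.Icc (-(n:ℤ)) n, c m * (∑ i : Fin (2*n+1),
          ((Dmat (2*n+1))^k) j i * Complex.exp (I * m * (node (2*n+1) i : ℝ))) := by
    simp_rw [Finset.mul_sum]
    rw [Finset.sum_comm]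
    apply Finset.sum_congr rfl
    intro m _
    apply Finset.sum_congr rfl
    intro i _
    ring
  rw [hswap]
  apply Finset.sum_congr rfl
  intro m hm
  simp only [Finset.mem_Icc] at hm
  have hpm := congrFun (pow_mulVec_exp n m hm.1 hm.2 k) j
  have hpm' : ∑ i : Fin (2*n+1), ((Dmat (2*n+1))^k) j i
      * Complex.exp (I * m * (node (2*n+1) i : ℝ))
      = (I * m)^k * Complex.exp (I * m * (node (2*n+1) j : ℝ)) := hpm
  rw [hpm']
  ring
end
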